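/- Let γ : [a,b] → ℝⁿ be C¹ with Lipschitz derivative and η : ℝⁿ → ℝⁿ a Lipschitz map with Lip(η) ≤ 1 and ‖η(γ(t))‖ = r for all t, such that ⟨γ′(t), η(γ(t))⟩ = 0 for all t, ‖γ′(t)‖ = 1 for all t, and γ′′(t) is collinear with η(γ(t)) for almost every t. Then ‖γ′′(t)‖ ≤ 1/r for almost every t, and hence Lip(γ′) ≤ 1/r. -/

import Mathlib

open MeasureTheory Filter Topology

/-- A Lipschitz function on `[a,b]` whose a.e. derivative is bounded by `K` in norm is
`K`-Lipschitz on `[a,b]`. -/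
lemma lipOn_of_ae_deriv {E : Type*} [NormedAddCommGroup E] [NormedSpace ℝ E] [CompleteSpace E]
    {a b : ℝ} {f f' : ℝ → E} {C : NNReal} (hf : LipschitzOnWith C f (Set.Icc a b))
    (hderiv : ∀ᵐ t ∂(volume.restrict (Set.Icc a b)), HasDerivAt f (f' t) t)
    {K : ℝ} (hK : 0 ≤ K)
    (hbound : ∀ᵐ t ∂(volume.restrict (Set.Icc a b)), ‖f' t‖ ≤ K) :
    LipschitzOnWith K.toNNReal f (Set.Icc a b) := by
  have hderiv' : ∀ᵐ t ∂(volume : Measure ℝ), t ∈ Set.Icc a b → HasDerivAt f (f' t) t :=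
    (ae_restrict_iff' measurableSet_Icc).1 hderiv
  have hcont : ContinuousOn f (Set.Icc a b) := hf.continuousOn
  have hint : ∀ x ∈ Set.Icc a b, ∀ y ∈ Set.Icc a b, IntervalIntegrable f volume x y :=
    fun x hx y hy => (hcont.mono (Set.uIcc_subset_Icc hx hy)).intervalIntegrable
  have key : ∀ u ∈ Set.Icc a b, ∀ v ∈ Set.Icc a b, u ≤ v → v < b →
      ‖f v - f u‖ ≤ K * (v - u) := by
    intro u hu v hv huv hvb
    set δ := b - v with hδ
    have hδpos : 0 < δ := sub_pos.2 hvb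
    set h : ℕ → ℝ := fun n => δ / (n + 1) with hh
    have hpos : ∀ n, 0 < h n := fun n => div_pos hδpos (by positivity)
    have hle : ∀ n, h n ≤ δ := by
      intro n
      rw [hh]
      rw [div_le_iff₀ (by positivity : (0:ℝ) < (n:ℝ) + 1)]
      nlinarith [hδpos, (Nat.cast_nonneg n : (0:ℝ) ≤ n)]
    have hto : Tendsto h atTop (𝓝 0) := by
      have h1 : Tendsto (fun n : ℕ => 1 / ((n:ℝ) + 1)) atTop (𝓝 0) :=
        tendsto_one_div_add_atTop_nhds_zero_nat
      have := h1.const_mul δ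
      simpa [hh, mul_one_div, div_eq_mul_inv] using this
    set F : ℕ → ℝ → E := fun n t => (h n)⁻¹ • (f (t + h n) - f t) with hF
    have hmemh : ∀ n, ∀ w, w ∈ Set.Icc a b → w ≤ v → w + h n ∈ Set.Icc a b := by
      intro n w hw hwv
      exact ⟨by linarith [hw.1, hpos n], by linarith [hle n]⟩
    -- (i) integral of the difference quotient
    have hIeq : ∀ n, (∫ t in u..v, F n t) =
        (h n)⁻¹ • ((∫ t in v..(v + h n), f t) - ∫ t in u..(u + h n), f t) := by
      intro n
      have h1 : u + h n ∈ Set.Icc a b := hmemh n u hu huv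
      have h2 : v + h n ∈ Set.Icc a b := hmemh n v hv le_rfl
      have hshift : ContinuousOn (fun t => f (t + h n)) (Set.uIcc u v) := by
        apply hcont.comp (continuous_add_right (h n)).continuousOn
        intro t ht
        rw [Set.uIcc_of_le huv] at ht
        simp only [Set.mem_Icc] at ht ⊢
        exact ⟨by linarith [ht.1, hu.1, hpos n], by linarith [ht.2, hle n]⟩
      have hint1 : IntervalIntegrable (fun t => f (t + h n)) volume u v :=
        hshift.intervalIntegrable
      have hint2 : IntervalIntegrable f volume u v := hint u hu v hv
      have e0 : (∫ t in u..v, F n t) =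
          (h n)⁻¹ • ((∫ t in u..v, f (t + h n)) - ∫ t in u..v, f t) := by
        rw [hF]
        simp only []
        rw [intervalIntegral.integral_smul, intervalIntegral.integral_sub hint1 hint2]
      rw [e0, intervalIntegral.integral_comp_add_right]
      congr 1
      have A : (∫ t in u..(v + h n), f t) = (∫ t in u..v, f t) + ∫ t in v..(v + h n), f t :=
        (intervalIntegral.integral_add_adjacent_intervals (hint u hu v hv) (hint v hv _ h2)).symm
      have B : (∫ t in u..(v + h n), f t) =
          (∫ t in u..(u + h n), f t) + ∫ t in (u + h n)..(v + h n), f t :=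
        (intervalIntegral.integral_add_adjacent_intervals (hint u hu _ h1) (hint _ h1 _ h2)).symm
      have hAB := A.symm.trans B
      -- goal : ∫_{u+h}^{v+h} f - ∫_u^v f = ∫_v^{v+h} f - ∫_u^{u+h} f
      rw [sub_eq_sub_iff_add_eq_add]
      calc (∫ t in (u + h n)..(v + h n), f t) + ∫ t in u..(u + h n), f t
          = (∫ t in u..(u + h n), f t) + ∫ t in (u + h n)..(v + h n), f t := add_comm _ _
        _ = (∫ t in u..v, f t) + ∫ t in v..(v + h n), f t := hAB.symm
        _ = (∫ t in v..(v + h n), f t) + ∫ t in u..v, f t := add_comm _ _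
    -- (ii) endpoint limits
    have hlimw : ∀ w, w ∈ Set.Icc a b → w ≤ v →
        Tendsto (fun n => (h n)⁻¹ • ∫ t in w..(w + h n), f t) atTop (𝓝 (f w)) := by
      intro w hw hwv
      rw [tendsto_iff_norm_sub_tendsto_zero]
      have hb : Tendsto (fun n => (C:ℝ) * h n) atTop (𝓝 0) := by
        simpa using hto.const_mul (C:ℝ)
      apply squeeze_zero (fun n => norm_nonneg _) _ hb
      intro n
      have hwh : w + h n ∈ Set.Icc a b := hmemh n w hw hwv
      have hintw : IntervalIntegrable f volume w (w + h n) := hint w hw _ hwh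
      have hconst : (∫ _ in w..(w + h n), f w) = (h n) • f w := by
        rw [intervalIntegral.integral_const]
        congr 1
        ring
      have e : (h n)⁻¹ • (∫ t in w..(w + h n), f t) - f w
          = (h n)⁻¹ • ∫ t in w..(w + h n), (f t - f w) := by
        rw [intervalIntegral.integral_sub hintw intervalIntegrable_const, hconst, smul_sub,
          smul_smul, inv_mul_cancel₀ (hpos n).ne', one_smul]
      rw [e, norm_smul]
      have hbound2 : ∀ t ∈ Set.uIoc w (w + h n), ‖f t - f w‖ ≤ (C:ℝ) * h n := by
        intro t ht
        rw [Set.uIoc_of_le (by linarith [hpos n])] at ht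
        have htI : t ∈ Set.Icc a b := ⟨by linarith [ht.1, hw.1], by linarith [ht.2, hwh.2]⟩
        calc ‖f t - f w‖ = dist (f t) (f w) := (dist_eq_norm _ _).symm
          _ ≤ (C:ℝ) * dist t w := hf.dist_le_mul t htI w hw
          _ ≤ (C:ℝ) * h n := by
              apply mul_le_mul_of_nonneg_left _ C.coe_nonneg
              rw [Real.dist_eq, abs_of_nonneg (by linarith [ht.1])]
              linarith [ht.2]
      have hnorm := intervalIntegral.norm_integral_le_of_norm_le_const hbound2
      have habs : |w + h n - w| = h n := by
        rw [add_sub_cancel_left, abs_of_pos (hpos n)]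
      rw [habs] at hnorm
      calc ‖(h n)⁻¹‖ * ‖∫ t in w..(w + h n), (f t - f w)‖
          ≤ (h n)⁻¹ * ((C:ℝ) * h n * h n) := by
            apply mul_le_mul _ hnorm (norm_nonneg _) (by positivity)
            rw [Real.norm_eq_abs, abs_of_pos (by positivity)]
        _ = (C:ℝ) * h n := by field_simp
    -- (iii) dominated convergence
    have hDCT : Tendsto (fun n => ∫ t in u..v, F n t) atTop (𝓝 (∫ t in u..v, f' t)) := by
      apply intervalIntegral.tendsto_integral_filter_of_dominated_convergence
        (fun _ => (C:ℝ))
      · apply Eventually.of_forall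
        intro n
        have hcnt : ContinuousOn (F n) (Set.Icc u v) := by
          apply ContinuousOn.smul continuousOn_const
          apply ContinuousOn.sub
          · apply hcont.comp (continuous_add_right (h n)).continuousOn
            intro t ht
            simp only [Set.mem_Icc] at ht ⊢
            exact ⟨by linarith [ht.1, hu.1, hpos n], by linarith [ht.2, hle n]⟩
          · exact hcont.mono (Set.Icc_subset_Icc hu.1 (le_trans hv.2 le_rfl))
        have h1 : AEStronglyMeasurable (F n) (volume.restrict (Set.Icc u v)) :=
          hcnt.aestronglyMeasurable measurableSet_Icc
        exact h1.mono_measure (Measure.restrict_mono (by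
          rw [Set.uIoc_of_le huv]; exact Set.Ioc_subset_Icc_self) le_rfl)
      · apply Eventually.of_forall
        intro n
        apply Eventually.of_forall
        intro t ht
        rw [Set.uIoc_of_le huv] at ht
        have htI : t ∈ Set.Icc a b := ⟨by linarith [ht.1, hu.1], by linarith [ht.2, hv.2]⟩
        have hthI : t + h n ∈ Set.Icc a b := hmemh n t htI ht.2
        have : ‖F n t‖ = (h n)⁻¹ * ‖f (t + h n) - f t‖ := by
          rw [hF]
          simp only []
          rw [norm_smul, Real.norm_eq_abs, abs_of_pos (by positivity)]
        rw [this]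
        have : ‖f (t + h n) - f t‖ ≤ (C:ℝ) * h n := by
          calc ‖f (t + h n) - f t‖ = dist (f (t + h n)) (f t) := (dist_eq_norm _ _).symm
            _ ≤ (C:ℝ) * dist (t + h n) t := hf.dist_le_mul _ hthI t htI
            _ = (C:ℝ) * h n := by
                rw [Real.dist_eq, add_sub_cancel_left, abs_of_pos (hpos n)]
        calc (h n)⁻¹ * ‖f (t + h n) - f t‖ ≤ (h n)⁻¹ * ((C:ℝ) * h n) := by
              apply mul_le_mul_of_nonneg_left this (by positivity)
          _ = (C:ℝ) := by rw [inv_mul_eq_div, mul_div_assoc, div_self (hpos n).ne', mul_one]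
      · exact intervalIntegrable_const
      · filter_upwards [hderiv'] with t hd ht
        rw [Set.uIoc_of_le huv] at ht
        have htI : t ∈ Set.Icc a b := ⟨by linarith [ht.1, hu.1], by linarith [ht.2, hv.2]⟩
        have hdt := hd htI
        have hslope := hasDerivAt_iff_tendsto_slope.1 hdt
        have hmap : Tendsto (fun n => t + h n) atTop (𝓝[≠] t) := by
          rw [tendsto_nhdsWithin_iff]
          constructor
          · simpa using tendsto_const_nhds.add hto
          · apply Eventually.of_forall
            intro n
            simp only [Set.mem_compl_iff, Set.mem_singleton_iff]
            intro hcontra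
            have : h n = 0 := by linarith [congrArg (fun z => z - t) hcontra]
            exact (hpos n).ne' this
        have := hslope.comp hmap
        convert this using 1
        funext n
        rw [Function.comp_apply, slope_def_module, add_sub_cancel_left]
    -- (iv) bound on the integral of f'
    have hI2 : ‖∫ t in u..v, f' t‖ ≤ K * (v - u) := by
      rw [intervalIntegral.integral_of_le huv]
      have hae : ∀ᵐ t ∂(volume.restrict (Set.Ioc u v)), ‖f' t‖ ≤ K :=
        ae_restrict_of_ae_restrict_of_subset
          (Set.Ioc_subset_Icc_self.trans (Set.Icc_subset_Icc hu.1 hv.2)) hbound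
      calc ‖∫ t in Set.Ioc u v, f' t‖ ≤ ∫ _ in Set.Ioc u v, K :=
            norm_integral_le_of_norm_le (integrable_const _) hae
        _ = K * (v - u) := by
            rw [setIntegral_const, Real.volume_real_Ioc_of_le huv, smul_eq_mul]
            ring
    -- combine
    have hfinal : Tendsto (fun n => ∫ t in u..v, F n t) atTop (𝓝 (f v - f u)) := by
      have : Tendsto (fun n => (h n)⁻¹ • (∫ t in v..(v + h n), f t)
          - (h n)⁻¹ • ∫ t in u..(u + h n), f t) atTop (𝓝 (f v - f u)) :=
        (hlimw v hv le_rfl).sub (hlimw u hu huv)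
      convert this using 1
      funext n
      rw [hIeq n, smul_sub]
    have heq : f v - f u = ∫ t in u..v, f' t := tendsto_nhds_unique hfinal hDCT
    rw [heq]
    exact hI2
  -- extend to the right endpoint
  have key2 : ∀ u ∈ Set.Icc a b, ∀ v ∈ Set.Icc a b, u ≤ v → ‖f v - f u‖ ≤ K * (v - u) := by
    intro u hu v hv huv
    rcases lt_or_eq_of_le hv.2 with hvb | hvb
    · exact key u hu v hv huv hvb
    · rcases lt_or_eq_of_le huv with huv' | huv'
      · have hne : Filter.NeBot (𝓝[Set.Ico u v] v) := by
          rw [nhdsWithin_Ico_eq_nhdsLT huv']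
          infer_instance
        have hsub : Set.Ico u v ⊆ Set.Icc a b := fun w hw =>
          ⟨le_trans hu.1 hw.1, le_trans hw.2.le hv.2⟩
        have hcwa : Tendsto f (𝓝[Set.Ico u v] v) (𝓝 (f v)) :=
          (hcont v hv).mono hsub
        have htend : Tendsto (fun w => ‖f w - f u‖) (𝓝[Set.Ico u v] v) (𝓝 ‖f v - f u‖) :=
          (hcwa.sub tendsto_const_nhds).norm
        apply le_of_tendsto htend
        filter_upwards [self_mem_nhdsWithin] with w hw
        have hwI : w ∈ Set.Icc a b := hsub hw
        have hwb : w < b := lt_of_lt_of_le hw.2 hv.2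
        calc ‖f w - f u‖ ≤ K * (w - u) := key u hu w hwI hw.1 hwb
          _ ≤ K * (v - u) := by
              apply mul_le_mul_of_nonneg_left _ hK
              linarith [hw.2.le]
      · rw [← huv']
        simp [mul_nonneg hK]
  apply LipschitzOnWith.of_dist_le_mul
  intro x hx y hy
  rw [Real.coe_toNNReal K hK, dist_eq_norm, Real.dist_eq]
  rcases le_total x y with hxy | hxy
  · calc ‖f x - f y‖ = ‖f y - f x‖ := norm_sub_rev _ _
      _ ≤ K * (y - x) := key2 x hx y hy hxy
      _ = K * |x - y| := by rw [abs_sub_comm, abs_of_nonneg (by linarith)]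
  · calc ‖f x - f y‖ ≤ K * (x - y) := key2 y hy x hx hxy
      _ = K * |x - y| := by rw [abs_of_nonneg (by linarith)]

theorem stmt13 (n : ℕ) (r : ℝ) (hr : 0 < r) (a b : ℝ) (hab : a < b)
    (γ γ' γ'' : ℝ → EuclideanSpace ℝ (Fin n))
    (η : EuclideanSpace ℝ (Fin n) → EuclideanSpace ℝ (Fin n))
    (hγ : ∀ t ∈ Set.Icc a b, HasDerivAt γ (γ' t) t)
    (hγ'lip : ∃ C : NNReal, LipschitzOnWith C γ' (Set.Icc a b))
    (hηlip : LipschitzWith 1 η)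
    (hηnorm : ∀ t ∈ Set.Icc a b, ‖η (γ t)‖ = r)
    (horth : ∀ t ∈ Set.Icc a b, (inner ℝ (γ' t) (η (γ t)) : ℝ) = 0)
    (hspeed : ∀ t ∈ Set.Icc a b, ‖γ' t‖ = 1)
    (hderiv2 : ∀ᵐ t ∂(volume.restrict (Set.Icc a b)), HasDerivAt γ' (γ'' t) t)
    (hcol : ∀ᵐ t ∂(volume.restrict (Set.Icc a b)),
      γ'' t = (r^2)⁻¹ • ((inner ℝ (γ'' t) (η (γ t)) : ℝ) • η (γ t))) :
    (∀ᵐ t ∂(volume.restrict (Set.Icc a b)), ‖γ'' t‖ ≤ 1 / r) ∧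
    LipschitzOnWith (Real.toNNReal (1/r)) γ' (Set.Icc a b) := by
  obtain ⟨C, hC⟩ := hγ'lip
  have hγlip : LipschitzOnWith 1 γ (Set.Icc a b) := by
    apply Convex.lipschitzOnWith_of_nnnorm_hasDerivWithin_le (convex_Icc a b)
      (fun x hx => (hγ x hx).hasDerivWithinAt)
    intro x hx
    rw [← NNReal.coe_le_coe, coe_nnnorm, hspeed x hx, NNReal.coe_one]
  have hIoo : ∀ᵐ t ∂(volume.restrict (Set.Icc a b)), t ∈ Set.Ioo a b := by
    rw [ae_restrict_iff' measurableSet_Icc]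
    have h0 : (volume : Measure ℝ) ({a, b} : Set ℝ) = 0 :=
      Set.Finite.measure_zero ((Set.finite_singleton b).insert a) _
    refine ae_iff.mpr (measure_mono_null ?_ h0)
    intro t ht
    simp only [Set.mem_setOf_eq, Classical.not_imp] at ht
    obtain ⟨htI, htn⟩ := ht
    simp only [Set.mem_insert_iff, Set.mem_singleton_iff]
    by_contra hcontra
    push_neg at hcontra
    exact htn ⟨lt_of_le_of_ne htI.1 (Ne.symm hcontra.1), lt_of_le_of_ne htI.2 hcontra.2⟩
  have hmain : ∀ᵐ t ∂(volume.restrict (Set.Icc a b)), ‖γ'' t‖ ≤ 1 / r := by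
    filter_upwards [hderiv2, hcol, hIoo] with t hd hc ht
    set c : ℝ := inner ℝ (γ'' t) (η (γ t)) with hcdef
    have htI : t ∈ Set.Icc a b := Set.Ioo_subset_Icc_self ht
    have habs : |c| ≤ 1 := by
      have hslope := hasDerivAt_iff_tendsto_slope.1 hd
      have hmono : 𝓝[Set.Ioo t b] t ≤ 𝓝[≠] t :=
        nhdsWithin_mono t (fun s hs => Set.mem_compl_singleton_iff.mpr hs.1.ne')
      have hne : (𝓝[Set.Ioo t b] t).NeBot := by
        rw [nhdsWithin_Ioo_eq_nhdsGT ht.2]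
        infer_instance
      have htend : Tendsto (fun s => |(inner ℝ (slope γ' t s) (η (γ t)) : ℝ)|)
          (𝓝[Set.Ioo t b] t) (𝓝 |c|) :=
        (((hslope.mono_left hmono).inner tendsto_const_nhds).abs)
      apply le_of_tendsto htend
      filter_upwards [self_mem_nhdsWithin] with s hs
      have hsI : s ∈ Set.Icc a b := ⟨le_trans htI.1 hs.1.le, hs.2.le⟩
      have e1 : (inner ℝ (γ' s - γ' t) (η (γ t)) : ℝ) = inner ℝ (γ' s) (η (γ t) - η (γ s)) := by
        rw [inner_sub_left, inner_sub_right, horth t htI, horth s hsI]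
      have e2 : ‖η (γ t) - η (γ s)‖ ≤ |s - t| := by
        calc ‖η (γ t) - η (γ s)‖ = dist (η (γ t)) (η (γ s)) := (dist_eq_norm _ _).symm
          _ ≤ 1 * dist (γ t) (γ s) := by
              have := hηlip.dist_le_mul (γ t) (γ s)
              simpa using this
          _ ≤ 1 * (1 * dist t s) := by
              have := hγlip.dist_le_mul t htI s hsI
              simpa using this
          _ = |s - t| := by rw [one_mul, one_mul, Real.dist_eq, abs_sub_comm]
      have hsne : |s - t| ≠ 0 := abs_ne_zero.mpr (sub_ne_zero.mpr hs.1.ne')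
      rw [slope_def_module, real_inner_smul_left, e1, abs_mul, abs_inv]
      calc |s - t|⁻¹ * |(inner ℝ (γ' s) (η (γ t) - η (γ s)) : ℝ)|
          ≤ |s - t|⁻¹ * (‖γ' s‖ * ‖η (γ t) - η (γ s)‖) :=
            mul_le_mul_of_nonneg_left (abs_real_inner_le_norm _ _) (by positivity)
        _ ≤ |s - t|⁻¹ * (1 * |s - t|) := by
            apply mul_le_mul_of_nonneg_left _ (by positivity)
            apply mul_le_mul (le_of_eq (hspeed s hsI)) e2 (norm_nonneg _) zero_le_one
        _ = 1 := by
            rw [one_mul, inv_mul_cancel₀ hsne]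
    calc ‖γ'' t‖ = ‖(r^2)⁻¹ • (c • η (γ t))‖ := by rw [← hc]
      _ = (r^2)⁻¹ * (|c| * r) := by
          rw [norm_smul, norm_smul, hηnorm t htI, Real.norm_eq_abs, Real.norm_eq_abs,
            abs_of_nonneg (by positivity : (0:ℝ) ≤ (r^2)⁻¹)]
      _ ≤ (r^2)⁻¹ * (1 * r) := by
          apply mul_le_mul_of_nonneg_left _ (by positivity)
          exact mul_le_mul_of_nonneg_right habs hr.le
      _ = 1 / r := by
          field_simp
  exact ⟨hmain, lipOn_of_ae_deriv hC hderiv2 (by positivity) hmain⟩
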